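/- Fix d ≥ 1 and Δ > 0 with (d+7)^{1+Δ} < d+8. Suppose a sequence p_k ∈ [0,1] satisfies p_{k+1} ≤ L_{k+1}^A (p_k^{d+8} + e^{−c L_k^δ}) for constants A, c, δ > 0, where L_{k+1} = L_k^{d+7}. Then there exists ℓ₁ such that if L_0 ≥ ℓ₁ and p_0 ≤ exp(−(log L_0)^{1+Δ}), then p_k ≤ exp(−(log L_k)^{1+Δ}) for all k ≥ 0. -/

import Mathlib

open Real Filter

private lemma ms_aux_tendsto (B C ε c δ Δ : ℝ) (hε : 0 < ε) (hc : 0 < c) (hδ : 0 < δ)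
    (hΔ : 0 < Δ) :
    Tendsto (fun y : ℝ => Real.exp (B * y - ε * y ^ ((1:ℝ) + Δ)) +
      Real.exp (B * y + C * y ^ ((1:ℝ) + Δ) - c * Real.exp (δ * y))) atTop (nhds 0) := by
  have h1 : Tendsto (fun y : ℝ => B * y - ε * y ^ ((1:ℝ) + Δ)) atTop atBot := by
    have hb : Tendsto (fun y : ℝ => B - ε * y ^ Δ) atTop atBot := by
      have h := (tendsto_rpow_atTop hΔ).const_mul_atTop hε
      have h' := tendsto_atBot_add_const_left atTop B (tendsto_neg_atTop_atBot.comp h)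
      refine h'.congr ?_
      intro y; simp [sub_eq_add_neg, Function.comp]
    have h := tendsto_id.atTop_mul_atBot₀ hb
    refine h.congr' ?_
    filter_upwards [eventually_gt_atTop (0:ℝ)] with y hy
    have hre : y ^ ((1:ℝ) + Δ) = y * y ^ Δ := by
      rw [Real.rpow_add hy, Real.rpow_one]
    simp only [id_eq, hre]; ring
  have h2 : Tendsto (fun y : ℝ => B * y + C * y ^ ((1:ℝ) + Δ) - c * Real.exp (δ * y))
      atTop atBot := by
    have hratio : Tendsto (fun y : ℝ =>
        (B * y + C * y ^ ((1:ℝ) + Δ)) * Real.exp (-(δ * y)) - c) atTop (nhds (0 - c)) := by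
      have hz : Tendsto (fun y : ℝ =>
          (B * y + C * y ^ ((1:ℝ) + Δ)) * Real.exp (-(δ * y))) atTop (nhds 0) := by
        have t1 : Tendsto (fun y : ℝ => B * (y ^ (1:ℝ) * Real.exp (-δ * y))) atTop
            (nhds (B * 0)) :=
          (tendsto_rpow_mul_exp_neg_mul_atTop_nhds_zero 1 δ hδ).const_mul B
        have t2 : Tendsto (fun y : ℝ => C * (y ^ ((1:ℝ) + Δ) * Real.exp (-δ * y))) atTop
            (nhds (C * 0)) :=
          (tendsto_rpow_mul_exp_neg_mul_atTop_nhds_zero ((1:ℝ) + Δ) δ hδ).const_mul C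
        have h := t1.add t2
        rw [mul_zero, mul_zero, add_zero] at h
        refine h.congr' ?_
        filter_upwards with y
        rw [Real.rpow_one]
        ring_nf
      exact hz.sub_const c
    have hexp : Tendsto (fun y : ℝ => Real.exp (δ * y)) atTop atTop :=
      Real.tendsto_exp_atTop.comp (tendsto_id.const_mul_atTop hδ)
    rw [zero_sub] at hratio
    have h := hexp.atTop_mul_neg (by linarith : -c < 0) hratio
    refine h.congr' ?_
    filter_upwards with y
    have hone : Real.exp (δ * y) * Real.exp (-(δ * y)) = 1 := by
      rw [← Real.exp_add]; simp
    calc Real.exp (δ * y) * ((B * y + C * y ^ ((1:ℝ) + Δ)) * Real.exp (-(δ * y)) - c)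
        = (B * y + C * y ^ ((1:ℝ) + Δ)) * (Real.exp (δ * y) * Real.exp (-(δ * y)))
          - c * Real.exp (δ * y) := by ring
      _ = B * y + C * y ^ ((1:ℝ) + Δ) - c * Real.exp (δ * y) := by rw [hone]; ring
  have e1 := Real.tendsto_exp_atBot.comp h1
  have e2 := Real.tendsto_exp_atBot.comp h2
  simpa using e1.add e2

/-- Multiscale induction: if `p_{k+1} ≤ L_{k+1}^A (p_k^{d+8} + e^{-c L_k^δ})` with
`L_{k+1} = L_k^{d+7}` and `(d+7)^{1+Δ} < d+8`, then there is `ℓ₁` such that whenever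
`L₀ ≥ ℓ₁` and `p₀ ≤ exp(-(log L₀)^{1+Δ})`, we have `p_k ≤ exp(-(log L_k)^{1+Δ})` for all `k`. -/
theorem multiscale_induction (d : ℕ) (hd : 1 ≤ d) (Δ A c δ : ℝ) (hΔ : 0 < Δ)
    (hcrit : ((d : ℝ) + 7) ^ ((1 : ℝ) + Δ) < (d : ℝ) + 8)
    (hA : 0 < A) (hc : 0 < c) (hδ : 0 < δ) :
    ∃ ℓ₁ : ℝ, ∀ L : ℕ → ℝ, 0 < L 0 → ℓ₁ ≤ L 0 →
      (∀ k, L (k + 1) = L k ^ (d + 7)) →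
      ∀ p : ℕ → ℝ, (∀ k, 0 ≤ p k ∧ p k ≤ 1) →
      (∀ k, p (k + 1) ≤ L (k + 1) ^ A * (p k ^ (d + 8) + Real.exp (-(c * L k ^ δ)))) →
      p 0 ≤ Real.exp (-(Real.log (L 0) ^ ((1 : ℝ) + Δ))) →
      ∀ k, p k ≤ Real.exp (-(Real.log (L k) ^ ((1 : ℝ) + Δ))) := by
  have hC0 : 0 < ((d : ℝ) + 7) ^ ((1 : ℝ) + Δ) := Real.rpow_pos_of_pos (by positivity) _
  have hε : 0 < (d : ℝ) + 8 - ((d : ℝ) + 7) ^ ((1 : ℝ) + Δ) := by linarith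
  have htend := ms_aux_tendsto (A * ((d : ℝ) + 7)) (((d : ℝ) + 7) ^ ((1 : ℝ) + Δ))
    ((d : ℝ) + 8 - ((d : ℝ) + 7) ^ ((1 : ℝ) + Δ)) c δ Δ hε hc hδ hΔ
  have hcomp := htend.comp Real.tendsto_log_atTop
  have hev := hcomp.eventually_le_const one_pos
  simp only [Function.comp] at hev
  obtain ⟨t, ht⟩ := eventually_atTop.mp hev
  refine ⟨max t 1, ?_⟩
  intro L hL0 hL1 hLrec p hp hrec hp0
  have key : ∀ k, max t 1 ≤ L k ∧ p k ≤ Real.exp (-(Real.log (L k) ^ ((1 : ℝ) + Δ))) := by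
    intro k
    induction k with
    | zero => exact ⟨hL1, hp0⟩
    | succ k ih =>
      obtain ⟨hLk, hpk⟩ := ih
      have h1L : (1 : ℝ) ≤ L k := le_trans (le_max_right t 1) hLk
      have h0L : (0 : ℝ) < L k := lt_of_lt_of_le one_pos h1L
      have hLk1 : L k ≤ L (k + 1) := by
        rw [hLrec k]; exact le_self_pow₀ h1L (by omega)
      refine ⟨le_trans hLk hLk1, ?_⟩
      have hx0 : 0 ≤ Real.log (L k) := Real.log_nonneg h1L
      have hlog : Real.log (L (k + 1)) = ((d : ℝ) + 7) * Real.log (L k) := by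
        rw [hLrec k, Real.log_pow]; push_cast; ring
      have hX : Real.log (L (k + 1)) ^ ((1 : ℝ) + Δ) =
          ((d : ℝ) + 7) ^ ((1 : ℝ) + Δ) * Real.log (L k) ^ ((1 : ℝ) + Δ) := by
        rw [hlog, Real.mul_rpow (by positivity) hx0]
      have hMA : L (k + 1) ^ A = Real.exp (A * ((d : ℝ) + 7) * Real.log (L k)) := by
        rw [Real.rpow_def_of_pos (lt_of_lt_of_le h0L hLk1)]
        congr 1; rw [hlog]; ring
      have hLδ : L k ^ δ = Real.exp (δ * Real.log (L k)) := by
        rw [Real.rpow_def_of_pos h0L]; congr 1; ring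
      have hpow : p k ^ (d + 8) ≤
          Real.exp (-(((d : ℝ) + 8) * Real.log (L k) ^ ((1 : ℝ) + Δ))) := by
        calc p k ^ (d + 8) ≤ (Real.exp (-(Real.log (L k) ^ ((1 : ℝ) + Δ)))) ^ (d + 8) :=
              pow_le_pow_left₀ (hp k).1 hpk _
          _ = Real.exp (-(((d : ℝ) + 8) * Real.log (L k) ^ ((1 : ℝ) + Δ))) := by
              rw [← Real.exp_nat_mul]; congr 1; push_cast; ring
      have hgx := ht (L k) (le_trans (le_max_left t 1) hLk)
      set x := Real.log (L k) with hxdef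
      set X := x ^ ((1 : ℝ) + Δ) with hXdef
      have hmul := mul_le_mul_of_nonneg_right hgx
        (Real.exp_pos (-(((d : ℝ) + 7) ^ ((1 : ℝ) + Δ) * X))).le
      rw [add_mul, one_mul, ← Real.exp_add, ← Real.exp_add] at hmul
      have e1 : A * ((d : ℝ) + 7) * x -
          ((d : ℝ) + 8 - ((d : ℝ) + 7) ^ ((1 : ℝ) + Δ)) * X +
          -(((d : ℝ) + 7) ^ ((1 : ℝ) + Δ) * X) =
          A * ((d : ℝ) + 7) * x + -(((d : ℝ) + 8) * X) := by ring
      have e2 : A * ((d : ℝ) + 7) * x + ((d : ℝ) + 7) ^ ((1 : ℝ) + Δ) * X -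
          c * Real.exp (δ * x) + -(((d : ℝ) + 7) ^ ((1 : ℝ) + Δ) * X) =
          A * ((d : ℝ) + 7) * x + -(c * Real.exp (δ * x)) := by ring
      rw [e1, e2] at hmul
      calc p (k + 1) ≤ L (k + 1) ^ A * (p k ^ (d + 8) + Real.exp (-(c * L k ^ δ))) := hrec k
        _ = Real.exp (A * ((d : ℝ) + 7) * x) *
            (p k ^ (d + 8) + Real.exp (-(c * Real.exp (δ * x)))) := by rw [hMA, hLδ]
        _ ≤ Real.exp (A * ((d : ℝ) + 7) * x) *
            (Real.exp (-(((d : ℝ) + 8) * X)) + Real.exp (-(c * Real.exp (δ * x)))) := by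
            exact mul_le_mul_of_nonneg_left (add_le_add_left hpow _) (Real.exp_pos _).le
        _ = Real.exp (A * ((d : ℝ) + 7) * x + -(((d : ℝ) + 8) * X)) +
            Real.exp (A * ((d : ℝ) + 7) * x + -(c * Real.exp (δ * x))) := by
            rw [mul_add, ← Real.exp_add, ← Real.exp_add]
        _ ≤ Real.exp (-(((d : ℝ) + 7) ^ ((1 : ℝ) + Δ) * X)) := hmul
        _ = Real.exp (-(Real.log (L (k + 1)) ^ ((1 : ℝ) + Δ))) := by rw [hX]
  exact fun k => (key k).2
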